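/- Let θ_c' = (1/3)·( (26 + 6√33)^{1/3} − 8/(26 + 6√33)^{1/3} − 1 ). For θ ∈ (0, 1), the quadratic equation θ³ξ² + θ(3θ² − 1)ξ + 2θ³ − 2θ + 1 = 0 in the real variable ξ has: exactly two solutions ξ₁ < ξ₂ if θ ∈ (0, θ_c'), where ξ₁ = (1 − 3θ² − √((θ−1)(θ³+θ²+3θ−1)))/(2θ²) and ξ₂ = (1 − 3θ² + √((θ−1)(θ³+θ²+3θ−1)))/(2θ²); exactly one solution ξ₁ = (1 − 3θ²)/(2θ²) if θ = θ_c'; and no real solution if θ ∈ (θ_c', 1). -/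

import Mathlib

/-- Solution count of the quadratic `θ³ξ² + θ(3θ² - 1)ξ + 2θ³ - 2θ + 1 = 0`
for `θ ∈ (0,1)`, with threshold `θ_c' = (1/3)((26 + 6√33)^{1/3} - 8/(26 + 6√33)^{1/3} - 1)`:
two explicit solutions `ξ₁ < ξ₂` for `θ < θ_c'`, one solution for `θ = θ_c'`, none for
`θ > θ_c'`. -/
theorem sos_xi_quadratic_solutions :
    let c : ℝ := (26 + 6 * Real.sqrt 33) ^ ((1 : ℝ) / 3)
    let θc' : ℝ := (1 / 3) * (c - 8 / c - 1)
    ∀ θ : ℝ, 0 < θ → θ < 1 →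
      (θ < θc' →
        ∃ ξ₁ ξ₂ : ℝ, ξ₁ < ξ₂ ∧
          ξ₁ = (1 - 3 * θ ^ 2 - Real.sqrt ((θ - 1) * (θ ^ 3 + θ ^ 2 + 3 * θ - 1)))
              / (2 * θ ^ 2) ∧
          ξ₂ = (1 - 3 * θ ^ 2 + Real.sqrt ((θ - 1) * (θ ^ 3 + θ ^ 2 + 3 * θ - 1)))
              / (2 * θ ^ 2) ∧
          {ξ : ℝ | θ ^ 3 * ξ ^ 2 + θ * (3 * θ ^ 2 - 1) * ξ + 2 * θ ^ 3 - 2 * θ + 1 = 0}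
            = {ξ₁, ξ₂}) ∧
      (θ = θc' →
        {ξ : ℝ | θ ^ 3 * ξ ^ 2 + θ * (3 * θ ^ 2 - 1) * ξ + 2 * θ ^ 3 - 2 * θ + 1 = 0}
          = {(1 - 3 * θ ^ 2) / (2 * θ ^ 2)}) ∧
      (θc' < θ →
        {ξ : ℝ | θ ^ 3 * ξ ^ 2 + θ * (3 * θ ^ 2 - 1) * ξ + 2 * θ ^ 3 - 2 * θ + 1 = 0}
          = ∅) := by
  intro c θc' θ hθ0 hθ1
  have hcdef : c = (26 + 6 * Real.sqrt 33) ^ ((1 : ℝ) / 3) := rfl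
  have hθcdef : θc' = (1 / 3) * (c - 8 / c - 1) := rfl
  have h33 : Real.sqrt 33 ^ 2 = 33 := Real.sq_sqrt (by norm_num)
  have hKpos : (0:ℝ) < 26 + 6 * Real.sqrt 33 := by positivity
  have hcpos : 0 < c := hcdef ▸ Real.rpow_pos_of_pos hKpos _
  have hcne : c ≠ 0 := hcpos.ne'
  have hc3 : c ^ 3 = 26 + 6 * Real.sqrt 33 := by
    rw [hcdef, ← Real.rpow_natCast (_ ^ ((1:ℝ)/3)) 3, ← Real.rpow_mul hKpos.le]
    norm_num
  have hinv : (8/c) ^ 3 = 6 * Real.sqrt 33 - 26 := by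
    rw [div_pow, hc3, eq_comm, eq_div_iff (by positivity)]
    nlinarith [h33]
  have hcd : c * (8/c) = 8 := by field_simp
  have hs52 : (c - 8/c)^3 + 24*(c - 8/c) = 52 := by
    linear_combination hc3 - hinv - 3*(c - 8/c)*hcd
  have hroot : θc' ^ 3 + θc' ^ 2 + 3 * θc' - 1 = 0 := by
    rw [hθcdef]; linear_combination (1/27) * hs52
  have hθc0 : 0 < θc' := by nlinarith [sq_nonneg (2*θc' + 1), sq_nonneg θc']
  clear_value c θc'
  have hθne : θ ≠ 0 := hθ0.ne'
  -- sign of P(θ) := θ^3+θ^2+3θ-1 relative to θc'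
  have hfacP : ∀ a b : ℝ, (a^3+a^2+3*a-1) - (b^3+b^2+3*b-1)
      = (a-b)*(a^2+a*b+b^2+a+b+3) := by intros; ring
  have hQpos : ∀ a b : ℝ, 0 < a^2+a*b+b^2+a+b+3 := by
    intro a b; nlinarith [sq_nonneg (a+b+1), sq_nonneg a, sq_nonneg b]
  refine ⟨?_, ?_, ?_⟩
  · -- θ < θc' : two roots
    intro hlt
    have hP : θ^3 + θ^2 + 3*θ - 1 < 0 := by
      have := hfacP θ θc'
      nlinarith [hQpos θ θc', mul_pos (sub_pos.mpr hlt) (hQpos θ θc')]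
    have hD : 0 < (θ - 1) * (θ ^ 3 + θ ^ 2 + 3 * θ - 1) :=
      mul_pos_of_neg_of_neg (by linarith) hP
    set S := Real.sqrt ((θ - 1) * (θ ^ 3 + θ ^ 2 + 3 * θ - 1)) with hSdef
    have hS2 : S^2 = (θ - 1) * (θ ^ 3 + θ ^ 2 + 3 * θ - 1) := Real.sq_sqrt hD.le
    have hSpos : 0 < S := Real.sqrt_pos.mpr hD
    refine ⟨_, _, ?_, rfl, rfl, ?_⟩
    · rw [div_lt_div_iff₀ (by positivity) (by positivity)]
      nlinarith [mul_pos hSpos (mul_pos two_pos (pow_pos hθ0 2))]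
    · have hfact : ∀ ξ : ℝ, θ ^ 3 * ξ ^ 2 + θ * (3 * θ ^ 2 - 1) * ξ + 2 * θ ^ 3 - 2 * θ + 1
          = θ^3 * (ξ - (1 - 3*θ^2 - S)/(2*θ^2)) * (ξ - (1 - 3*θ^2 + S)/(2*θ^2)) := by
        intro ξ; field_simp; ring_nf; linear_combination hS2
      ext ξ
      simp only [Set.mem_setOf_eq, Set.mem_insert_iff, Set.mem_singleton_iff, hfact]
      constructor
      · intro h
        rcases mul_eq_zero.mp h with h | h
        · rcases mul_eq_zero.mp h with h | h
          · exact absurd h (by positivity)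
          · exact Or.inl (by linarith [sub_eq_zero.mp h])
        · exact Or.inr (by linarith [sub_eq_zero.mp h])
      · rintro (rfl | rfl) <;> ring
  · -- θ = θc' : one root
    intro heq
    have hP : θ^3 + θ^2 + 3*θ - 1 = 0 := heq ▸ hroot
    have hfact : ∀ ξ : ℝ, θ ^ 3 * ξ ^ 2 + θ * (3 * θ ^ 2 - 1) * ξ + 2 * θ ^ 3 - 2 * θ + 1
        = θ^3 * (ξ - (1 - 3*θ^2)/(2*θ^2)) * (ξ - (1 - 3*θ^2)/(2*θ^2)) := by
      have hS2 : (0:ℝ)^2 = (θ - 1) * (θ ^ 3 + θ ^ 2 + 3 * θ - 1) := by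
        rw [hP]; ring
      intro ξ; field_simp; ring_nf
      linear_combination (-(θ-1)) * hP
    ext ξ
    simp only [Set.mem_setOf_eq, Set.mem_singleton_iff, hfact]
    constructor
    · intro h
      rcases mul_eq_zero.mp h with h | h
      · rcases mul_eq_zero.mp h with h | h
        · exact absurd h (by positivity)
        · linarith [sub_eq_zero.mp h]
      · linarith [sub_eq_zero.mp h]
    · rintro rfl; ring
  · -- θc' < θ : no roots
    intro hlt
    have hP : 0 < θ^3 + θ^2 + 3*θ - 1 := by
      have := hfacP θ θc'
      nlinarith [mul_pos (sub_pos.mpr hlt) (hQpos θ θc')]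
    ext ξ
    simp only [Set.mem_setOf_eq, Set.mem_empty_iff_false, iff_false]
    intro h
    have hDneg : (θ-1)*(θ^3+θ^2+3*θ-1) < 0 :=
      mul_neg_of_neg_of_pos (by linarith) hP
    have hkey : 4*θ*(θ ^ 3 * ξ ^ 2 + θ * (3 * θ ^ 2 - 1) * ξ + 2 * θ ^ 3 - 2 * θ + 1)
        = (2*θ^2*ξ + 3*θ^2 - 1)^2 - (θ-1)*(θ^3+θ^2+3*θ-1) := by ring
    rw [h, mul_zero] at hkey
    linarith [sq_nonneg (2*θ^2*ξ + 3*θ^2 - 1)]
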